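/- For any integrable f on 𝕋¹ and any test function ψ, the alignment collision operator Q_{AL}(f,f)(φ) = ∫_{𝕋¹}(2 b(2φ-φ*,φ*) 𝟙_{|φ-φ*|<π/4} f(2φ-φ*) f(φ*) - b(φ,φ*) 𝟙_{|φ-φ*|<π/2} f(φ) f(φ*)) dφ* satisfies the weak formulation ∫_{𝕋¹} Q_{AL}(f,f) ψ dφ = ∫_{𝕋¹} ∫_{|φ*-φ|<π/2} b(φ,φ*) f(φ) f(φ*) (ψ((φ+φ*)/2) - (ψ(φ)+ψ(φ*))/2) dφ* dφ, for a symmetric collision cross-section b. -/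

import Mathlib

open MeasureTheory Set

/-- The alignment collision operator
`Q_AL(f,f)(φ) = 2∫_{|φ-φ*|<π/4} b(2φ-φ*,φ*) f(2φ-φ*) f(φ*) dφ* - ∫_{|φ-φ*|<π/2} b(φ,φ*) f(φ) f(φ*) dφ*`. -/
noncomputable def QAL (b : ℝ → ℝ → ℝ) (f : ℝ → ℝ) (φ : ℝ) : ℝ :=
  2 * (∫ ψ in Ioo (φ - Real.pi/4) (φ + Real.pi/4), b (2*φ - ψ) ψ * f (2*φ - ψ) * f ψ)
  - ∫ ψ in Ioo (φ - Real.pi/2) (φ + Real.pi/2), b φ ψ * f φ * f ψ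

private lemma swapII (F : ℝ → ℝ → ℝ) (hF : Continuous (Function.uncurry F))
    {p q r s : ℝ} (hpq : p ≤ q) (hrs : r ≤ s) :
    (∫ x in p..q, ∫ y in r..s, F x y) = ∫ y in r..s, ∫ x in p..q, F x y := by
  rw [intervalIntegral.integral_of_le hpq, intervalIntegral.integral_of_le hrs]
  simp_rw [intervalIntegral.integral_of_le hrs, intervalIntegral.integral_of_le hpq]
  apply MeasureTheory.integral_integral_swap
  rw [Measure.prod_restrict]
  have hc : IntegrableOn (Function.uncurry F) (Icc p q ×ˢ Icc r s) (volume.prod volume) :=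
    hF.continuousOn.integrableOn_compact (isCompact_Icc.prod isCompact_Icc)
  exact hc.mono_set (prod_mono Ioc_subset_Icc_self Ioc_subset_Icc_self)

private lemma pershift (g : ℝ → ℝ) (hg : Function.Periodic g (2*Real.pi)) (d : ℝ) :
    (∫ φ in (0:ℝ)..(2*Real.pi), g (φ + d)) = ∫ φ in (0:ℝ)..(2*Real.pi), g φ := by
  rw [intervalIntegral.integral_comp_add_right, zero_add, add_comm (2*Real.pi) d]
  simpa using hg.intervalIntegral_add_eq d 0

theorem stmt_14 (b : ℝ → ℝ → ℝ) (f tf : ℝ → ℝ)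
    (hb_cont : Continuous (Function.uncurry b))
    (hb_sym : ∀ x y, b x y = b y x)
    (hb_per1 : ∀ x y, b (x + 2*Real.pi) y = b x y)
    (hb_per2 : ∀ x y, b x (y + 2*Real.pi) = b x y)
    (hf_cont : Continuous f) (hf_per : Function.Periodic f (2*Real.pi))
    (htf_cont : Continuous tf) (htf_per : Function.Periodic tf (2*Real.pi)) :
    (∫ φ in Ioc 0 (2*Real.pi), QAL b f φ * tf φ)
      = ∫ φ in Ioc 0 (2*Real.pi), ∫ ψ in Ioo (φ - Real.pi/2) (φ + Real.pi/2),
          b φ ψ * f φ * f ψ * (tf ((φ + ψ)/2) - (tf φ + tf ψ)/2) := by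
  have pi_pos := Real.pi_pos
  set π := Real.pi with hπ
  have h0 : (0:ℝ) ≤ 2*π := by linarith
  have hh : -(π/2) ≤ π/2 := by linarith
  -- abbreviation
  set P : ℝ → ℝ → ℝ := fun x y => b x y * f x * f y with hPdef
  have hPsym : ∀ x y, P x y = P y x := by
    intro x y; simp only [hPdef, hb_sym x y]; ring
  have hPper1 : ∀ x y, P (x + 2*π) y = P x y := by
    intro x y; simp only [hPdef, hb_per1, hf_per x]
  have hPper2 : ∀ x y, P x (y + 2*π) = P x y := by
    intro x y; simp only [hPdef, hb_per2, hf_per y]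
  -- continuity helpers
  have cb : ∀ {g1 g2 : ℝ × ℝ → ℝ}, Continuous g1 → Continuous g2 →
      Continuous (fun p => P (g1 p) (g2 p)) := by
    intro g1 g2 h1 h2
    exact ((hb_cont.comp (h1.prodMk h2)).mul (hf_cont.comp h1)).mul (hf_cont.comp h2)
  have c1 : Continuous (fun p : ℝ × ℝ => p.1) := continuous_fst
  have c2 : Continuous (fun p : ℝ × ℝ => p.2) := continuous_snd
  have c12 : Continuous (fun p : ℝ × ℝ => p.1 + p.2) := by fun_prop
  have cm : Continuous (fun p : ℝ × ℝ => p.1 - p.2/2) := by fun_prop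
  have cp : Continuous (fun p : ℝ × ℝ => p.1 + p.2/2) := by fun_prop
  -- parametric continuity
  have param : ∀ (G : ℝ → ℝ → ℝ), Continuous (Function.uncurry G) →
      Continuous (fun φ => ∫ u in (-(π/2))..(π/2), G φ u) := by
    intro G hG
    exact intervalIntegral.continuous_parametric_intervalIntegral_of_continuous' hG _ _
  -- the four basic double integrals
  set A := ∫ φ in (0:ℝ)..(2*π), ∫ u in (-(π/2))..(π/2), P (φ - u/2) (φ + u/2) * tf φ with hA
  set B := ∫ φ in (0:ℝ)..(2*π), ∫ u in (-(π/2))..(π/2), P φ (φ + u) * tf φ with hB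
  set C := ∫ φ in (0:ℝ)..(2*π), ∫ u in (-(π/2))..(π/2), P φ (φ + u) * tf (φ + u/2) with hC
  set E := ∫ φ in (0:ℝ)..(2*π), ∫ u in (-(π/2))..(π/2), P φ (φ + u) * tf (φ + u) with hE
  -- continuity of the integrands as functions of (φ, u)
  have cA : Continuous (fun p : ℝ × ℝ => P (p.1 - p.2/2) (p.1 + p.2/2) * tf p.1) :=
    (cb cm cp).mul (htf_cont.comp c1)
  have cB : Continuous (fun p : ℝ × ℝ => P p.1 (p.1 + p.2) * tf p.1) :=
    (cb c1 c12).mul (htf_cont.comp c1)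
  have cC : Continuous (fun p : ℝ × ℝ => P p.1 (p.1 + p.2) * tf (p.1 + p.2/2)) :=
    (cb c1 c12).mul (htf_cont.comp cp)
  have cE : Continuous (fun p : ℝ × ℝ => P p.1 (p.1 + p.2) * tf (p.1 + p.2)) :=
    (cb c1 c12).mul (htf_cont.comp c12)
  -- Step 1: LHS = A - B
  have hLHS : (∫ φ in Ioc 0 (2*π), QAL b f φ * tf φ) = A - B := by
    rw [← intervalIntegral.integral_of_le h0]
    have key : ∀ φ : ℝ, QAL b f φ * tf φ =
        (∫ u in (-(π/2))..(π/2), P (φ - u/2) (φ + u/2) * tf φ)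
          - ∫ u in (-(π/2))..(π/2), P φ (φ + u) * tf φ := by
      intro φ
      have hgain : (∫ ψ in Ioo (φ - π/4) (φ + π/4), b (2*φ - ψ) ψ * f (2*φ - ψ) * f ψ)
          = ∫ v in (-(π/4))..(π/4), P (φ - v) (φ + v) := by
        rw [← MeasureTheory.integral_Ioc_eq_integral_Ioo,
          ← intervalIntegral.integral_of_le (by linarith : φ - π/4 ≤ φ + π/4)]
        have := intervalIntegral.integral_comp_add_left
          (fun ψ => b (2*φ - ψ) ψ * f (2*φ - ψ) * f ψ) φ (a := -(π/4)) (b := π/4)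
        rw [show φ + -(π/4) = φ - π/4 by ring] at this
        rw [← this]
        apply intervalIntegral.integral_congr
        intro v _
        simp only [hPdef, show 2*φ - (φ + v) = φ - v by ring]
      have hloss : (∫ ψ in Ioo (φ - π/2) (φ + π/2), b φ ψ * f φ * f ψ)
          = ∫ u in (-(π/2))..(π/2), P φ (φ + u) := by
        rw [← MeasureTheory.integral_Ioc_eq_integral_Ioo,
          ← intervalIntegral.integral_of_le (by linarith : φ - π/2 ≤ φ + π/2)]
        have := intervalIntegral.integral_comp_add_left
          (fun ψ => b φ ψ * f φ * f ψ) φ (a := -(π/2)) (b := π/2)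
        rw [show φ + -(π/2) = φ - π/2 by ring] at this
        rw [← this]
      have hdouble : 2 * (∫ v in (-(π/4))..(π/4), P (φ - v) (φ + v))
          = ∫ u in (-(π/2))..(π/2), P (φ - u/2) (φ + u/2) := by
        have := intervalIntegral.inv_smul_integral_comp_div
          (fun v => P (φ - v) (φ + v)) (2:ℝ) (a := -(π/2)) (b := π/2)
        rw [show -(π/2)/(2:ℝ) = -(π/4) by ring, show (π/2)/(2:ℝ) = π/4 by ring] at this
        rw [← this]
        simp only [smul_eq_mul]
        ring
      show (2 * (∫ ψ in Ioo (φ - π/4) (φ + π/4), b (2*φ - ψ) ψ * f (2*φ - ψ) * f ψ)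
          - ∫ ψ in Ioo (φ - π/2) (φ + π/2), b φ ψ * f φ * f ψ) * tf φ = _
      rw [hgain, hloss, hdouble, sub_mul, ← intervalIntegral.integral_mul_const,
        ← intervalIntegral.integral_mul_const]
    simp_rw [key]
    rw [intervalIntegral.integral_sub]
    · exact ((param (fun φ u => P (φ - u/2) (φ + u/2) * tf φ) cA).intervalIntegrable _ _)
    · exact ((param (fun φ u => P φ (φ + u) * tf φ) cB).intervalIntegrable _ _)
  -- Step 2: RHS = C - (B + E)/2
  have hRHS : (∫ φ in Ioc 0 (2*π), ∫ ψ in Ioo (φ - π/2) (φ + π/2),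
        b φ ψ * f φ * f ψ * (tf ((φ + ψ)/2) - (tf φ + tf ψ)/2)) = C - (B + E)/2 := by
    rw [← intervalIntegral.integral_of_le h0]
    have key : ∀ φ : ℝ, (∫ ψ in Ioo (φ - π/2) (φ + π/2),
        b φ ψ * f φ * f ψ * (tf ((φ + ψ)/2) - (tf φ + tf ψ)/2))
        = (∫ u in (-(π/2))..(π/2), P φ (φ + u) * tf (φ + u/2))
          - ((∫ u in (-(π/2))..(π/2), P φ (φ + u) * tf φ)
             + ∫ u in (-(π/2))..(π/2), P φ (φ + u) * tf (φ + u))/2 := by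
      intro φ
      have hsub : (∫ ψ in Ioo (φ - π/2) (φ + π/2),
          b φ ψ * f φ * f ψ * (tf ((φ + ψ)/2) - (tf φ + tf ψ)/2))
          = ∫ u in (-(π/2))..(π/2),
              P φ (φ + u) * tf (φ + u/2)
                - (P φ (φ + u) * tf φ + P φ (φ + u) * tf (φ + u))/2 := by
        rw [← MeasureTheory.integral_Ioc_eq_integral_Ioo,
          ← intervalIntegral.integral_of_le (by linarith : φ - π/2 ≤ φ + π/2)]
        have := intervalIntegral.integral_comp_add_left
          (fun ψ => b φ ψ * f φ * f ψ * (tf ((φ + ψ)/2) - (tf φ + tf ψ)/2)) φ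
          (a := -(π/2)) (b := π/2)
        rw [show φ + -(π/2) = φ - π/2 by ring] at this
        rw [← this]
        apply intervalIntegral.integral_congr
        intro u _
        simp only [hPdef, show (φ + (φ + u))/2 = φ + u/2 by ring]
        ring
      rw [hsub, intervalIntegral.integral_sub, intervalIntegral.integral_div,
        intervalIntegral.integral_add]
      · exact (((cb c1 c12).mul (htf_cont.comp c1)).comp
          (Continuous.prodMk continuous_const continuous_id)).intervalIntegrable _ _
      · exact (((cb c1 c12).mul (htf_cont.comp c12)).comp
          (Continuous.prodMk continuous_const continuous_id)).intervalIntegrable _ _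
      · exact (((cb c1 c12).mul (htf_cont.comp cp)).comp
          (Continuous.prodMk continuous_const continuous_id)).intervalIntegrable _ _
      · apply IntervalIntegrable.div_const
        apply IntervalIntegrable.add
        · exact (((cb c1 c12).mul (htf_cont.comp c1)).comp
            (Continuous.prodMk continuous_const continuous_id)).intervalIntegrable _ _
        · exact (((cb c1 c12).mul (htf_cont.comp c12)).comp
            (Continuous.prodMk continuous_const continuous_id)).intervalIntegrable _ _
    simp_rw [key]
    rw [intervalIntegral.integral_sub, intervalIntegral.integral_div,
      intervalIntegral.integral_add]
    · exact ((param (fun φ u => P φ (φ + u) * tf φ) cB).intervalIntegrable _ _)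
    · exact ((param (fun φ u => P φ (φ + u) * tf (φ + u)) cE).intervalIntegrable _ _)
    · exact ((param (fun φ u => P φ (φ + u) * tf (φ + u/2)) cC).intervalIntegrable _ _)
    · exact (((param (fun φ u => P φ (φ + u) * tf φ) cB).add
        (param (fun φ u => P φ (φ + u) * tf (φ + u)) cE)).div_const 2).intervalIntegrable _ _
  -- Step 3: A = C
  have hAC : A = C := by
    rw [hA, hC, swapII (fun φ u => P (φ - u/2) (φ + u/2) * tf φ) cA h0 hh,
      swapII (fun φ u => P φ (φ + u) * tf (φ + u/2)) cC h0 hh]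
    apply intervalIntegral.integral_congr
    intro u _
    dsimp only
    symm
    have hper : Function.Periodic (fun φ => P (φ - u/2) (φ + u/2) * tf φ) (2*π) := by
      intro φ
      simp only [show φ + 2*π - u/2 = (φ - u/2) + 2*π by ring,
        show φ + 2*π + u/2 = (φ + u/2) + 2*π by ring, hPper1, hPper2, htf_per φ]
    have := pershift _ hper (u/2)
    rw [← hπ] at this
    calc (∫ φ in (0:ℝ)..(2*π), P φ (φ + u) * tf (φ + u/2))
        = ∫ φ in (0:ℝ)..(2*π), P (φ + u/2 - u/2) (φ + u/2 + u/2) * tf (φ + u/2) := by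
          apply intervalIntegral.integral_congr
          intro φ _
          dsimp only
          rw [show φ + u/2 - u/2 = φ by ring, show φ + u/2 + u/2 = φ + u by ring]
      _ = ∫ φ in (0:ℝ)..(2*π), P (φ - u/2) (φ + u/2) * tf φ := this
  -- Step 4: E = B
  have hEB : E = B := by
    rw [hE, hB, swapII (fun φ u => P φ (φ + u) * tf (φ + u)) cE h0 hh,
      swapII (fun φ u => P φ (φ + u) * tf φ) cB h0 hh]
    have step1 : ∀ u : ℝ, (∫ φ in (0:ℝ)..(2*π), P φ (φ + u) * tf (φ + u))
        = ∫ φ in (0:ℝ)..(2*π), P φ (φ + -u) * tf φ := by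
      intro u
      have hper : Function.Periodic (fun φ => P (φ - u) φ * tf φ) (2*π) := by
        intro φ
        simp only [show φ + 2*π - u = (φ - u) + 2*π by ring, hPper1, hPper2, htf_per φ]
      have := pershift _ hper u
      rw [← hπ] at this
      calc (∫ φ in (0:ℝ)..(2*π), P φ (φ + u) * tf (φ + u))
          = ∫ φ in (0:ℝ)..(2*π), P (φ + u - u) (φ + u) * tf (φ + u) := by
            apply intervalIntegral.integral_congr
            intro φ _
            dsimp only
            rw [show φ + u - u = φ by ring]
        _ = ∫ φ in (0:ℝ)..(2*π), P (φ - u) φ * tf φ := this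
        _ = ∫ φ in (0:ℝ)..(2*π), P φ (φ + -u) * tf φ := by
            apply intervalIntegral.integral_congr
            intro φ _
            dsimp only
            rw [show φ + -u = φ - u by ring, hPsym]
    simp_rw [step1]
    have := intervalIntegral.integral_comp_neg
      (fun u => ∫ φ in (0:ℝ)..(2*π), P φ (φ + u) * tf φ) (a := -(π/2)) (b := π/2)
    rw [neg_neg] at this
    exact this
  rw [hLHS, hRHS, hAC, hEB]
  ring
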